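/- Nonlinear Young germs admit sewings: Let T > 0, d ≥ 1, C ≥ 0 and γ₀, γ₁ ∈ (0,1]. Let F assign to each pair 0 ≤ s ≤ t ≤ T a function F_{s,t} : ℝ^d → ℝ such that (i) F_{s,u}(x) + F_{u,t}(x) = F_{s,t}(x) for all 0 ≤ s ≤ u ≤ t ≤ T and all x ∈ ℝ^d, (ii) sup_{x∈ℝ^d} |F_{s,t}(x)| ≤ C (t−s)^{γ₀} for all s ≤ t, and (iii) |F_{s,t}(x) − F_{s,t}(y)| ≤ C (t−s)^{γ₁} |x − y| for all s ≤ t and x, y ∈ ℝ^d. Let X : [0,T] → ℝ^d satisfy |X(u) − X(v)| ≤ R |u−v|^ρ for some R ≥ 0, ρ ∈ (0,1] with ρ + γ₁ > 1. Then the germ A_{s,t} := F_{s,t}(X(s)) satisfies |A_{s,t}| ≤ C (t−s)^{γ₀} and |(δA)_{s,u,t}| ≤ C R (t−s)^{ρ+γ₁} for all 0 ≤ s ≤ u ≤ t ≤ T, and there exist a constant c > 0 depending only on ρ + γ₁ and a function 𝒜 : [0,T] → ℝ with 𝒜(0) = 0 such that |𝒜(t) − 𝒜(s) − F_{s,t}(X(s))|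 ≤ c C R (t−s)^{ρ+γ₁} for all 0 ≤ s ≤ t ≤ T. -/

import Mathlib

open Filter Finset Real Topology

namespace NYSewing

noncomputable def cl (s t x : ℝ) : ℝ := min t (max s x)
noncomputable def gr (T : ℝ) (n k : ℕ) : ℝ := (k : ℝ) * T / 2 ^ n

lemma cl_mono (s t : ℝ) {x y : ℝ} (h : x ≤ y) : cl s t x ≤ cl s t y :=
  min_le_min le_rfl (max_le_max le_rfl h)
lemma cl_sub_cl (s t : ℝ) {x y : ℝ} (h : x ≤ y) : cl s t y - cl s t x ≤ y - x := by
  unfold cl; simp only [min_def, max_def]; split_ifs <;> linarith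
lemma le_cl {s t : ℝ} (hst : s ≤ t) (x : ℝ) : s ≤ cl s t x := le_min hst (le_max_left _ _)
lemma cl_le (s t x : ℝ) : cl s t x ≤ t := min_le_left _ _
lemma cl_diag (t x : ℝ) : cl t t x = t := by
  unfold cl; rw [min_eq_left (le_max_left _ _)]
lemma cl_left {s u t : ℝ} (hsu : s ≤ u) (hut : u ≤ t) (x : ℝ) :
    cl s u x = min u (cl s t x) := by
  unfold cl; simp only [min_def, max_def]; split_ifs <;> linarith
lemma cl_right {s u t : ℝ} (hsu : s ≤ u) (hut : u ≤ t) (x : ℝ) :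
    cl u t x = max u (cl s t x) := by
  unfold cl; simp only [min_def, max_def]; split_ifs <;> linarith

lemma gr_mono {T : ℝ} (hT : 0 ≤ T) (n : ℕ) {k l : ℕ} (h : k ≤ l) : gr T n k ≤ gr T n l := by
  unfold gr; gcongr
lemma gr_succ_sub (T : ℝ) (n k : ℕ) : gr T n (k+1) - gr T n k = T / 2 ^ n := by
  unfold gr; push_cast; ring
lemma gr_double (T : ℝ) (n k : ℕ) : gr T (n+1) (2*k) = gr T n k := by
  unfold gr
  have : ((2:ℝ)^n) ≠ 0 := by positivity
  push_cast; rw [pow_succ]; field_simp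
lemma cell_chain (hT : 0 < T) (n k : ℕ) :
    gr T n k ≤ gr T (n+1) (2*k+1) ∧ gr T (n+1) (2*k+1) ≤ gr T n (k+1) := by
  constructor
  · rw [← gr_double T n k]; exact gr_mono hT.le _ (by omega)
  · rw [← gr_double T n (k+1)]; exact gr_mono hT.le _ (by omega)

noncomputable def S (T : ℝ) (A : ℝ → ℝ → ℝ) (n : ℕ) (s t : ℝ) : ℝ :=
  ∑ k ∈ Finset.range (2 ^ n), A (cl s t (gr T n k)) (cl s t (gr T n (k+1)))
noncomputable def dd (T : ℝ) (A : ℝ → ℝ → ℝ) (n k : ℕ) (s t : ℝ) : ℝ :=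
  A (cl s t (gr T n k)) (cl s t (gr T (n+1) (2*k+1)))
  + A (cl s t (gr T (n+1) (2*k+1))) (cl s t (gr T n (k+1)))
  - A (cl s t (gr T n k)) (cl s t (gr T n (k+1)))

lemma sum_range_two_mul (f : ℕ → ℝ) (m : ℕ) :
    ∑ i ∈ Finset.range (2*m), f i = ∑ k ∈ Finset.range m, (f (2*k) + f (2*k+1)) := by
  induction m with
  | zero => simp
  | succ m ih =>
    have h : 2 * (m+1) = (2*m + 1) + 1 := by ring
    rw [h, Finset.sum_range_succ, Finset.sum_range_succ, ih, Finset.sum_range_succ]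
    ring

section main
variable {T M α : ℝ} {A : ℝ → ℝ → ℝ}

lemma S_succ_sub (n : ℕ) (s t : ℝ) :
    S T A (n+1) s t - S T A n s t = ∑ k ∈ Finset.range (2 ^ n), dd T A n k s t := by
  unfold S
  have h2 : (2:ℕ) ^ (n+1) = 2 * 2 ^ n := by rw [pow_succ]; ring
  rw [h2, sum_range_two_mul, ← Finset.sum_sub_distrib]
  apply Finset.sum_congr rfl
  intro k _
  have e1 : 2*k+1+1 = 2*(k+1) := by ring
  rw [e1, gr_double, gr_double]
  unfold dd
  ring

lemma dd_abs_le (hT : 0 < T)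
    (hδ : ∀ s u t : ℝ, 0 ≤ s → s ≤ u → u ≤ t → t ≤ T →
      |A s t - A s u - A u t| ≤ M * (t-s)^α)
    {s t : ℝ} (hs : 0 ≤ s) (hst : s ≤ t) (htT : t ≤ T) (n k : ℕ) :
    |dd T A n k s t| ≤ M * (cl s t (gr T n (k+1)) - cl s t (gr T n k))^α := by
  obtain ⟨h1, h2⟩ := cell_chain hT n k
  set a := cl s t (gr T n k)
  set m := cl s t (gr T (n+1) (2*k+1))
  set b := cl s t (gr T n (k+1))
  have ham : a ≤ m := cl_mono s t h1
  have hmb : m ≤ b := cl_mono s t h2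
  have h0a : 0 ≤ a := hs.trans (le_cl hst _)
  have hbt : b ≤ T := (cl_le s t _).trans htT
  have := hδ a m b h0a ham hmb hbt
  have hdd : dd T A n k s t = -(A a b - A a m - A m b) := by unfold dd; ring
  rw [hdd, abs_neg]
  exact this

lemma cell_nonneg {s t : ℝ} (T : ℝ) (hT : 0 ≤ T) (n k : ℕ) :
    0 ≤ cl s t (gr T n (k+1)) - cl s t (gr T n k) :=
  sub_nonneg.2 (cl_mono s t (gr_mono hT n (by omega)))
lemma cell_le_h {s t : ℝ} (T : ℝ) (hT : 0 ≤ T) (n k : ℕ) :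
    cl s t (gr T n (k+1)) - cl s t (gr T n k) ≤ T / 2^n := by
  have := cl_sub_cl s t (x := gr T n k) (y := gr T n (k+1)) (gr_mono hT n (by omega))
  rw [gr_succ_sub] at this
  exact this
lemma cell_le_ts {s t : ℝ} (hst : s ≤ t) (T : ℝ) (n k : ℕ) :
    cl s t (gr T n (k+1)) - cl s t (gr T n k) ≤ t - s := by
  have h1 := le_cl hst (gr T n k)
  have h2 := cl_le s t (gr T n (k+1))
  linarith
lemma cell_telescope {s t T : ℝ} (h0 : 0 ≤ s) (hst : s ≤ t) (htT : t ≤ T) (n : ℕ) :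
    ∑ k ∈ Finset.range (2^n), (cl s t (gr T n (k+1)) - cl s t (gr T n k)) = t - s := by
  rw [Finset.sum_range_sub (fun k => cl s t (gr T n k))]
  have hg0 : gr T n 0 = 0 := by simp [gr]
  have hgT : gr T n (2^n) = T := by
    have : ((2:ℝ)^n) ≠ 0 := by positivity
    unfold gr; push_cast; field_simp
  rw [hg0, hgT]
  unfold cl
  rw [max_eq_right (hst.trans htT), min_eq_left htT, max_eq_left h0, min_eq_right hst]

lemma rpow_split {x α : ℝ} (hx : 0 ≤ x) (hα : 1 < α) : x ^ α = x ^ (α - 1) * x := by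
  have h : α = (α - 1) + 1 := by ring
  rw [h, Real.rpow_add' hx (by intro h'; linarith), Real.rpow_one]
  ring_nf

lemma level_sum_le (hT : 0 < T) (hM : 0 ≤ M) (hα : 1 < α)
    (hδ : ∀ s u t : ℝ, 0 ≤ s → s ≤ u → u ≤ t → t ≤ T →
      |A s t - A s u - A u t| ≤ M * (t-s)^α)
    {s t : ℝ} (hs : 0 ≤ s) (hst : s ≤ t) (htT : t ≤ T) (n : ℕ) :
    ∑ k ∈ Finset.range (2^n), |dd T A n k s t| ≤ M * (T / 2^n)^(α-1) * (t - s) := by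
  have key : ∀ k ∈ Finset.range (2^n), |dd T A n k s t| ≤
      M * (T / 2^n)^(α-1) * (cl s t (gr T n (k+1)) - cl s t (gr T n k)) := by
    intro k _
    refine (dd_abs_le hT hδ hs hst htT n k).trans ?_
    set x := cl s t (gr T n (k+1)) - cl s t (gr T n k) with hx
    have hx0 : 0 ≤ x := cell_nonneg T hT.le n k
    rw [rpow_split hx0 hα, ← mul_assoc]
    apply mul_le_mul_of_nonneg_right _ hx0
    apply mul_le_mul_of_nonneg_left _ hM
    exact Real.rpow_le_rpow hx0 (cell_le_h T hT.le n k) (by linarith)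
  calc ∑ k ∈ Finset.range (2^n), |dd T A n k s t|
      ≤ ∑ k ∈ Finset.range (2^n), M * (T / 2^n)^(α-1) *
          (cl s t (gr T n (k+1)) - cl s t (gr T n k)) := Finset.sum_le_sum key
    _ = M * (T / 2^n)^(α-1) * (t - s) := by
        rw [← Finset.mul_sum, cell_telescope hs hst htT]

lemma dd_ne_imp (hT : 0 < T)
    (hA0 : ∀ t : ℝ, 0 ≤ t → t ≤ T → A t t = 0)
    {s t : ℝ} (hs : 0 ≤ s) (hst : s ≤ t) (htT : t ≤ T) {n k : ℕ}
    (h : dd T A n k s t ≠ 0) :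
    s < gr T (n+1) (2*k+1) ∧ gr T (n+1) (2*k+1) < t := by
  by_contra hcon
  apply h
  rcases not_and_or.mp hcon with h1 | h2
  · push_neg at h1
    have hm : cl s t (gr T (n+1) (2*k+1)) = s := by
      unfold cl
      rw [max_eq_left h1, min_eq_right hst]
    have ha : cl s t (gr T n k) = s := by
      have hle : cl s t (gr T n k) ≤ cl s t (gr T (n+1) (2*k+1)) :=
        cl_mono s t (cell_chain hT n k).1
      have hge : s ≤ cl s t (gr T n k) := le_min hst (le_max_left _ _)
      rw [hm] at hle
      linarith
    unfold dd
    rw [hm, ha, hA0 s hs (hst.trans htT)]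
    ring
  · push_neg at h2
    have hm : cl s t (gr T (n+1) (2*k+1)) = t := by
      unfold cl
      rw [max_eq_right (hst.trans h2), min_eq_left h2]
    have hb : cl s t (gr T n (k+1)) = t := by
      have hle : cl s t (gr T (n+1) (2*k+1)) ≤ cl s t (gr T n (k+1)) :=
        cl_mono s t (cell_chain hT n k).2
      have hge : cl s t (gr T n (k+1)) ≤ t := min_le_left _ _
      rw [hm] at hle
      linarith
    unfold dd
    rw [hm, hb, hA0 t (hs.trans hst) htT]
    ring

lemma odd_grid_unique (hT : 0 < T) {s t : ℝ} {n k n' k' : ℕ} (hnn : n ≤ n')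
    (h1 : s < gr T (n+1) (2*k+1)) (h2 : gr T (n+1) (2*k+1) < t)
    (h1' : s < gr T (n'+1) (2*k'+1)) (h2' : gr T (n'+1) (2*k'+1) < t)
    (hcoarse : t - s < T / 2^(n'+1)) : n = n' ∧ k = k' := by
  have hh'pos : (0:ℝ) < T / 2^(n'+1) := by positivity
  have hexp : gr T (n+1) (2*k+1) = (((2*k+1) * 2^(n'-n) : ℕ) : ℝ) * (T / 2^(n'+1)) := by
    unfold gr
    have he : (2:ℝ)^(n'+1) = 2^(n+1) * 2^(n'-n) := by
      rw [← pow_add]; congr 1; omega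
    push_cast
    rw [he]
    have hx1 : ((2:ℝ)^(n+1)) ≠ 0 := by positivity
    have hx2 : ((2:ℝ)^(n'-n)) ≠ 0 := by positivity
    field_simp
  have hexp' : gr T (n'+1) (2*k'+1) = ((2*k'+1 : ℕ) : ℝ) * (T / 2^(n'+1)) := by
    unfold gr; push_cast; ring
  have hdist : |(((2*k+1) * 2^(n'-n) : ℕ) : ℝ) - ((2*k'+1 : ℕ) : ℝ)| < 1 := by
    have habs : |(((2*k+1) * 2^(n'-n) : ℕ) : ℝ) * (T / 2^(n'+1))
        - ((2*k'+1 : ℕ) : ℝ) * (T / 2^(n'+1))| < T / 2^(n'+1) := by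
      rw [← hexp, ← hexp', abs_lt]
      constructor <;> nlinarith
    rw [← sub_mul, abs_mul, abs_of_pos hh'pos] at habs
    by_contra hge
    push_neg at hge
    nlinarith
  have heq : (2*k+1) * 2^(n'-n) = 2*k'+1 := by
    rw [abs_lt] at hdist
    have hlt1 : (((2*k+1) * 2^(n'-n) : ℕ) : ℝ) < ((2*k'+1 : ℕ) : ℝ) + 1 := by linarith
    have hlt2 : ((2*k'+1 : ℕ) : ℝ) < (((2*k+1) * 2^(n'-n) : ℕ) : ℝ) + 1 := by linarith
    have hn1 : (2*k+1) * 2^(n'-n) < (2*k'+1) + 1 := by exact_mod_cast hlt1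
    have hn2 : 2*k'+1 < (2*k+1) * 2^(n'-n) + 1 := by exact_mod_cast hlt2
    omega
  have hd : n' - n = 0 := by
    by_contra hne
    obtain ⟨e, he⟩ : ∃ e, n' - n = e + 1 := ⟨n' - n - 1, by omega⟩
    rw [he] at heq
    have : (2*k+1) * 2^(e+1) = 2 * ((2*k+1) * 2^e) := by ring
    omega
  have hnn' : n = n' := by omega
  subst hnn'
  rw [hd] at heq
  exact ⟨rfl, by omega⟩


lemma S_zero {s t : ℝ} (hs : 0 ≤ s) (hst : s ≤ t) (htT : t ≤ T) :
    S T A 0 s t = A s t := by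
  unfold S
  rw [pow_zero, Finset.sum_range_one]
  have hg0 : gr T 0 0 = 0 := by simp [gr]
  have hg1 : gr T 0 1 = T := by simp [gr]
  rw [hg0, hg1]
  have hcl0 : cl s t 0 = s := by
    unfold cl; rw [max_eq_left hs, min_eq_right hst]
  have hclT : cl s t T = t := by
    unfold cl; rw [max_eq_right (hst.trans htT), min_eq_left htT]
  rw [hcl0, hclT]


lemma level_sum_le_ax (hT : 0 < T) (hM : 0 ≤ M) (hα : 1 < α)
    (hδ : ∀ s u t : ℝ, 0 ≤ s → s ≤ u → u ≤ t → t ≤ T →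
      |A s t - A s u - A u t| ≤ M * (t-s)^α)
    {s t : ℝ} (hs : 0 ≤ s) (hst : s ≤ t) (htT : t ≤ T) (n : ℕ) :
    |S T A (n+1) s t - S T A n s t| ≤ M * (T / 2^n)^(α-1) * (t - s) := by
  rw [S_succ_sub]
  exact (Finset.abs_sum_le_sum_abs _ _).trans (level_sum_le hT hM hα hδ hs hst htT n)

lemma r_lt_one (hα : 1 < α) : ((2:ℝ)^(α-1))⁻¹ < 1 := by
  have h1 : (1:ℝ) < 2^(α-1) := by
    rw [show (1:ℝ) = (2:ℝ)^(0:ℝ) by simp]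
    exact Real.rpow_lt_rpow_of_exponent_lt (by norm_num) (by linarith)
  exact inv_lt_one_of_one_lt₀ h1

lemma r_nonneg (α : ℝ) : 0 ≤ ((2:ℝ)^(α-1))⁻¹ := by positivity

lemma geom_le {r : ℝ} (h0 : 0 ≤ r) (h1 : r < 1) (m : ℕ) :
    ∑ i ∈ Finset.range m, r^i ≤ (1-r)⁻¹ := by
  have hne : r ≠ 1 := ne_of_lt h1
  rw [geom_sum_eq hne]
  have hpos : (0:ℝ) < 1 - r := by linarith
  have heq : (r^m - 1)/(r-1) = (1 - r^m)/(1-r) := by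
    rw [← neg_div_neg_eq]; ring_nf
  have h2 : 1 - r^m ≤ 1 := by nlinarith [pow_nonneg h0 m]
  rw [heq, inv_eq_one_div]
  exact div_le_div₀ (by norm_num) h2 hpos le_rfl

lemma ratio_pow (hT : 0 < T) (hα : 1 < α) (j i : ℕ) :
    (T / 2^(j+i))^(α-1) = (T / 2^j)^(α-1) * (((2:ℝ)^(α-1))⁻¹)^i := by
  have h1 : (T / 2^(j+i)) = (T / 2^j) * ((2:ℝ)⁻¹)^i := by
    rw [pow_add]
    field_simp
    rw [← mul_pow]; norm_num
  rw [h1, Real.mul_rpow (by positivity) (by positivity)]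
  congr 1
  rw [← Real.rpow_natCast ((2:ℝ)⁻¹) i, ← Real.rpow_mul (by norm_num), mul_comm,
    Real.rpow_mul (by norm_num), Real.rpow_natCast]
  congr 1
  rw [Real.inv_rpow (by norm_num)]


lemma S_sub_A_bound (hT : 0 < T) (hM : 0 ≤ M) (hα : 1 < α) (hα2 : α ≤ 2)
    (hA0 : ∀ t : ℝ, 0 ≤ t → t ≤ T → A t t = 0)
    (hδ : ∀ s u t : ℝ, 0 ≤ s → s ≤ u → u ≤ t → t ≤ T →
      |A s t - A s u - A u t| ≤ M * (t-s)^α)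
    {s t : ℝ} (hs : 0 ≤ s) (hst : s ≤ t) (htT : t ≤ T) (n : ℕ) :
    |S T A n s t - A s t| ≤
      (1 + 2 * (1 - ((2:ℝ)^(α-1))⁻¹)⁻¹) * M * (t-s)^α := by
  classical
  set r : ℝ := ((2:ℝ)^(α-1))⁻¹ with hrdef
  have hr0 : 0 ≤ r := r_nonneg α
  have hr1 : r < 1 := r_lt_one hα
  have hts0 : 0 ≤ t - s := by linarith
  have hrpow0 : 0 ≤ (t-s)^α := Real.rpow_nonneg hts0 α
  -- telescoping
  have htel : |S T A n s t - A s t| ≤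
      ∑ j ∈ Finset.range n, ∑ k ∈ Finset.range (2^j), |dd T A j k s t| := by
    have h1 : S T A n s t - A s t = ∑ j ∈ Finset.range n, (S T A (j+1) s t - S T A j s t) := by
      rw [Finset.sum_range_sub (fun j => S T A j s t), S_zero hs hst htT]
    rw [h1]
    refine (Finset.abs_sum_le_sum_abs _ _).trans ?_
    apply Finset.sum_le_sum
    intro j _
    rw [S_succ_sub]
    exact Finset.abs_sum_le_sum_abs _ _
  set P : ℕ → Prop := fun j => t - s < T / 2^(j+1) with hPdef
  have hsplit :
      ∑ j ∈ Finset.range n, ∑ k ∈ Finset.range (2^j), |dd T A j k s t|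
      = (∑ j ∈ (Finset.range n).filter P, ∑ k ∈ Finset.range (2^j), |dd T A j k s t|)
      + ∑ j ∈ (Finset.range n).filter (fun j => ¬ P j),
          ∑ k ∈ Finset.range (2^j), |dd T A j k s t| :=
    (Finset.sum_filter_add_sum_filter_not _ _ _).symm
  -- coarse part
  have hcoarse : ∑ j ∈ (Finset.range n).filter P,
      ∑ k ∈ Finset.range (2^j), |dd T A j k s t| ≤ M * (t-s)^α := by
    by_cases hall : ∀ j ∈ (Finset.range n).filter P, ∀ k ∈ Finset.range (2^j),
        dd T A j k s t = 0
    · have : ∑ j ∈ (Finset.range n).filter P,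
          ∑ k ∈ Finset.range (2^j), |dd T A j k s t| = 0 := by
        apply Finset.sum_eq_zero
        intro j hj
        apply Finset.sum_eq_zero
        intro k hk
        rw [hall j hj k hk, abs_zero]
      rw [this]
      positivity
    · push_neg at hall
      obtain ⟨j₀, hj₀, k₀, hk₀, hdd0⟩ := hall
      have hcoarse₀ : t - s < T / 2^(j₀+1) := (Finset.mem_filter.mp hj₀).2
      obtain ⟨hin1, hin2⟩ := dd_ne_imp hT hA0 hs hst htT hdd0
      have huniq : ∀ j ∈ (Finset.range n).filter P, ∀ k ∈ Finset.range (2^j),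
          ¬(j = j₀ ∧ k = k₀) → dd T A j k s t = 0 := by
        intro j hj k hk hne
        by_contra hnz
        have hcj : t - s < T / 2^(j+1) := (Finset.mem_filter.mp hj).2
        obtain ⟨hj1, hj2⟩ := dd_ne_imp hT hA0 hs hst htT hnz
        rcases le_total j j₀ with hle | hle
        · have := odd_grid_unique hT hle hj1 hj2 hin1 hin2 hcoarse₀
          exact hne this
        · have := odd_grid_unique hT hle hin1 hin2 hj1 hj2 hcj
          exact hne ⟨this.1.symm, this.2.symm⟩
      have hsum : ∑ j ∈ (Finset.range n).filter P,
          ∑ k ∈ Finset.range (2^j), |dd T A j k s t| = |dd T A j₀ k₀ s t| := by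
        rw [Finset.sum_eq_single_of_mem j₀ hj₀]
        · apply Finset.sum_eq_single_of_mem k₀ hk₀
          intro k hk hkne
          rw [huniq j₀ hj₀ k hk (fun h => hkne h.2), abs_zero]
        · intro j hj hjne
          apply Finset.sum_eq_zero
          intro k hk
          rw [huniq j hj k hk (fun h => hjne h.1), abs_zero]
      rw [hsum]
      refine (dd_abs_le hT hδ hs hst htT j₀ k₀).trans ?_
      apply mul_le_mul_of_nonneg_left _ hM
      exact Real.rpow_le_rpow (cell_nonneg T hT.le j₀ k₀) (cell_le_ts hst T j₀ k₀)
        (by linarith)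
  -- fine part
  have hfine : ∑ j ∈ (Finset.range n).filter (fun j => ¬ P j),
      ∑ k ∈ Finset.range (2^j), |dd T A j k s t|
      ≤ 2 * (1 - r)⁻¹ * M * (t-s)^α := by
    set fs := (Finset.range n).filter (fun j => ¬ P j) with hfs
    rcases fs.eq_empty_or_nonempty with he | hne
    · rw [he, Finset.sum_empty]
      have : (0:ℝ) ≤ (1-r)⁻¹ := by
        have : (0:ℝ) < 1 - r := by linarith
        positivity
      positivity
    · set j₀ := fs.min' hne with hj₀def
      have hj₀mem : j₀ ∈ fs := Finset.min'_mem _ hne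
      have hfine₀ : T / 2^(j₀+1) ≤ t - s := by
        have := (Finset.mem_filter.mp hj₀mem).2
        simpa [hPdef, not_lt] using this
      have hanchor : (T / 2^j₀) ≤ 2*(t-s) := by
        have h1 : T / 2^j₀ = 2 * (T / 2^(j₀+1)) := by
          rw [pow_succ]; field_simp
        rw [h1]; linarith
      have hstep : ∑ j ∈ fs, ∑ k ∈ Finset.range (2^j), |dd T A j k s t|
          ≤ ∑ j ∈ fs, M * (T / 2^j)^(α-1) * (t - s) := by
        apply Finset.sum_le_sum
        intro j _
        exact level_sum_le hT hM hα hδ hs hst htT j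
      have hsubset : fs ⊆ Finset.Ico j₀ n := by
        intro j hj
        rw [Finset.mem_Ico]
        exact ⟨Finset.min'_le _ _ hj, Finset.mem_range.mp (Finset.mem_filter.mp hj).1⟩
      have hmono : ∑ j ∈ fs, M * (T / 2^j)^(α-1) * (t - s)
          ≤ ∑ j ∈ Finset.Ico j₀ n, M * (T / 2^j)^(α-1) * (t - s) := by
        apply Finset.sum_le_sum_of_subset_of_nonneg hsubset
        intro j _ _
        have : (0:ℝ) ≤ (T / 2^j)^(α-1) := Real.rpow_nonneg (by positivity) _
        positivity
      have hgeom : ∑ j ∈ Finset.Ico j₀ n, M * (T / 2^j)^(α-1) * (t - s)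
          ≤ M * (T / 2^j₀)^(α-1) * (1-r)⁻¹ * (t - s) := by
        rw [Finset.sum_Ico_eq_sum_range]
        have hterm : ∀ i, M * (T / 2^(j₀+i))^(α-1) * (t - s)
            = (M * (T / 2^j₀)^(α-1) * (t-s)) * r^i := by
          intro i
          rw [ratio_pow hT hα j₀ i]
          ring
        calc ∑ i ∈ Finset.range (n - j₀), M * (T / 2^(j₀+i))^(α-1) * (t - s)
            = ∑ i ∈ Finset.range (n - j₀), (M * (T / 2^j₀)^(α-1) * (t-s)) * r^i := by
              apply Finset.sum_congr rfl; intro i _; exact hterm i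
          _ = (M * (T / 2^j₀)^(α-1) * (t-s)) * ∑ i ∈ Finset.range (n - j₀), r^i := by
              rw [Finset.mul_sum]
          _ ≤ (M * (T / 2^j₀)^(α-1) * (t-s)) * (1-r)⁻¹ := by
              apply mul_le_mul_of_nonneg_left (geom_le hr0 hr1 _)
              have : (0:ℝ) ≤ (T / 2^j₀)^(α-1) := Real.rpow_nonneg (by positivity) _
              positivity
          _ = M * (T / 2^j₀)^(α-1) * (1-r)⁻¹ * (t - s) := by ring
      have hlast : M * (T / 2^j₀)^(α-1) * (1-r)⁻¹ * (t - s)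
          ≤ 2 * (1 - r)⁻¹ * M * (t-s)^α := by
        have hinv : (0:ℝ) ≤ (1-r)⁻¹ := by
          have : (0:ℝ) < 1 - r := by linarith
          positivity
        have h1 : (T / 2^j₀)^(α-1) ≤ (2*(t-s))^(α-1) :=
          Real.rpow_le_rpow (by positivity) hanchor (by linarith)
        have h2 : (2*(t-s))^(α-1) = 2^(α-1) * (t-s)^(α-1) :=
          Real.mul_rpow (by norm_num) hts0
        have h3 : (2:ℝ)^(α-1) ≤ 2 := by
          nth_rewrite 2 [show (2:ℝ) = (2:ℝ)^(1:ℝ) by rw [Real.rpow_one]]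
          exact Real.rpow_le_rpow_of_exponent_le (by norm_num) (by linarith)
        have h4 : 0 ≤ (t-s)^(α-1) := Real.rpow_nonneg hts0 _
        have h5 : (t-s)^(α-1) * (t-s) = (t-s)^α := (rpow_split hts0 hα).symm
        calc M * (T / 2^j₀)^(α-1) * (1-r)⁻¹ * (t - s)
            ≤ M * (2^(α-1) * (t-s)^(α-1)) * (1-r)⁻¹ * (t - s) := by
              rw [← h2]
              gcongr
          _ ≤ M * (2 * (t-s)^(α-1)) * (1-r)⁻¹ * (t - s) := by
              gcongr
          _ = 2 * (1 - r)⁻¹ * M * ((t-s)^(α-1) * (t-s)) := by ring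
          _ = 2 * (1 - r)⁻¹ * M * (t-s)^α := by rw [h5]
      exact hstep.trans (hmono.trans (hgeom.trans hlast))
  calc |S T A n s t - A s t|
      ≤ ∑ j ∈ Finset.range n, ∑ k ∈ Finset.range (2^j), |dd T A j k s t| := htel
    _ = _ + _ := hsplit
    _ ≤ M * (t-s)^α + 2 * (1 - r)⁻¹ * M * (t-s)^α := add_le_add hcoarse hfine
    _ = (1 + 2 * (1 - r)⁻¹) * M * (t-s)^α := by ring




lemma geo_bound (hT : 0 < T) (hα : 1 < α) (n : ℕ) :
    (T / 2^n)^(α-1) = T^(α-1) * (((2:ℝ)^(α-1))⁻¹)^n := by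
  have := ratio_pow hT hα 0 n
  simpa using this

lemma S_cauchy (hT : 0 < T) (hM : 0 ≤ M) (hα : 1 < α)
    (hδ : ∀ s u t : ℝ, 0 ≤ s → s ≤ u → u ≤ t → t ≤ T →
      |A s t - A s u - A u t| ≤ M * (t-s)^α)
    {s t : ℝ} (hs : 0 ≤ s) (hst : s ≤ t) (htT : t ≤ T) :
    CauchySeq (fun n => S T A n s t) := by
  apply cauchySeq_of_le_geometric (((2:ℝ)^(α-1))⁻¹) (M * T^(α-1) * (t-s)) (r_lt_one hα)
  intro n
  rw [Real.dist_eq, abs_sub_comm]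
  refine (level_sum_le_ax hT hM hα hδ hs hst htT n).trans_eq ?_
  rw [geo_bound hT hα n]
  ring

/-- the sewing limit. -/
noncomputable def SLim (T : ℝ) (A : ℝ → ℝ → ℝ) (s t : ℝ) : ℝ :=
  limUnder atTop (fun n => S T A n s t)

lemma SLim_tendsto (hT : 0 < T) (hM : 0 ≤ M) (hα : 1 < α)
    (hδ : ∀ s u t : ℝ, 0 ≤ s → s ≤ u → u ≤ t → t ≤ T →
      |A s t - A s u - A u t| ≤ M * (t-s)^α)
    {s t : ℝ} (hs : 0 ≤ s) (hst : s ≤ t) (htT : t ≤ T) :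
    Tendsto (fun n => S T A n s t) atTop (𝓝 (SLim T A s t)) :=
  (S_cauchy hT hM hα hδ hs hst htT).tendsto_limUnder

lemma S_diag (hA0 : ∀ t : ℝ, 0 ≤ t → t ≤ T → A t t = 0)
    {t : ℝ} (ht : 0 ≤ t) (htT : t ≤ T) (n : ℕ) : S T A n t t = 0 := by
  unfold S
  apply Finset.sum_eq_zero
  intro k _
  rw [cl_diag, cl_diag, hA0 t ht htT]

lemma SLim_diag (hA0 : ∀ t : ℝ, 0 ≤ t → t ≤ T → A t t = 0)
    {t : ℝ} (ht : 0 ≤ t) (htT : t ≤ T) : SLim T A t t = 0 := by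
  unfold SLim
  have h : (fun n => S T A n t t) = fun _ => (0:ℝ) := funext fun n => S_diag hA0 ht htT n
  rw [h]
  exact Tendsto.limUnder_eq tendsto_const_nhds

lemma S_add_defect (hT : 0 < T) (hM : 0 ≤ M) (hα : 1 < α)
    (hA0 : ∀ t : ℝ, 0 ≤ t → t ≤ T → A t t = 0)
    (hδ : ∀ s u t : ℝ, 0 ≤ s → s ≤ u → u ≤ t → t ≤ T →
      |A s t - A s u - A u t| ≤ M * (t-s)^α)
    {s u t : ℝ} (hs : 0 ≤ s) (hsu : s ≤ u) (hut : u ≤ t) (htT : t ≤ T) (n : ℕ) :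
    |S T A n s u + S T A n u t - S T A n s t| ≤ (2:ℝ)^n * (M * (T / 2^n)^α) := by
  have hcell : ∀ k ∈ Finset.range (2^n),
      |A (cl s u (gr T n k)) (cl s u (gr T n (k+1)))
        + A (cl u t (gr T n k)) (cl u t (gr T n (k+1)))
        - A (cl s t (gr T n k)) (cl s t (gr T n (k+1)))| ≤ M * (T / 2^n)^α := by
    intro k _
    set a := cl s t (gr T n k) with ha
    set b := cl s t (gr T n (k+1)) with hb
    have hab : a ≤ b := cl_mono s t (gr_mono hT.le n (by omega))
    have h0a : 0 ≤ a := hs.trans (le_cl (hsu.trans hut) _)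
    have hbT : b ≤ T := (cl_le s t _).trans htT
    have hbound : M * (b - a)^α ≤ M * (T / 2^n)^α := by
      apply mul_le_mul_of_nonneg_left _ hM
      exact Real.rpow_le_rpow (by linarith) (cell_le_h T hT.le n k) (by linarith)
    rw [cl_left hsu hut, cl_left hsu hut, cl_right hsu hut, cl_right hsu hut, ← ha, ← hb]
    rcases le_total u a with h1 | h1
    · rw [min_eq_left h1, min_eq_left (h1.trans hab), max_eq_right h1,
        max_eq_right (h1.trans hab)]
      have : A u u + A a b - A a b = A u u := by ring
      rw [this, hA0 u (hs.trans hsu) (hut.trans htT), abs_zero]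
      have : (0:ℝ) ≤ (T / 2^n)^α := Real.rpow_nonneg (by positivity) _
      positivity
    · rcases le_total u b with h2 | h2
      · rw [min_eq_right h1, min_eq_left h2, max_eq_left h1, max_eq_right h2]
        have heq : A a u + A u b - A a b = -(A a b - A a u - A u b) := by ring
        rw [heq, abs_neg]
        exact (hδ a u b h0a h1 h2 hbT).trans hbound
      · rw [min_eq_right h1, min_eq_right h2, max_eq_left h1, max_eq_left h2]
        have : A a b + A u u - A a b = A u u := by ring
        rw [this, hA0 u (hs.trans hsu) (hut.trans htT), abs_zero]
        have : (0:ℝ) ≤ (T / 2^n)^α := Real.rpow_nonneg (by positivity) _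
        positivity
  have hsum : S T A n s u + S T A n u t - S T A n s t
      = ∑ k ∈ Finset.range (2^n),
        (A (cl s u (gr T n k)) (cl s u (gr T n (k+1)))
        + A (cl u t (gr T n k)) (cl u t (gr T n (k+1)))
        - A (cl s t (gr T n k)) (cl s t (gr T n (k+1)))) := by
    unfold S
    rw [← Finset.sum_add_distrib, ← Finset.sum_sub_distrib]
  rw [hsum]
  refine (Finset.abs_sum_le_sum_abs _ _).trans ?_
  refine (Finset.sum_le_sum hcell).trans_eq ?_
  rw [Finset.sum_const, Finset.card_range, nsmul_eq_mul]
  push_cast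
  ring

lemma defect_geo (hT : 0 < T) (hα : 1 < α) (n : ℕ) :
    (2:ℝ)^n * (M * (T / 2^n)^α) = (M * T^α) * (((2:ℝ)^(α-1))⁻¹)^n := by
  have h1 : (T / 2^n)^α = T^α * (((2:ℝ)^α)⁻¹)^n := by
    have h2 : (T / 2^n) = T * ((2:ℝ)⁻¹)^n := by
      field_simp
      rw [← mul_pow]; norm_num
    rw [h2, Real.mul_rpow hT.le (by positivity)]
    congr 1
    rw [← Real.rpow_natCast ((2:ℝ)⁻¹) n, ← Real.rpow_mul (by norm_num), mul_comm,
      Real.rpow_mul (by norm_num), Real.rpow_natCast]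
    congr 1
    rw [Real.inv_rpow (by norm_num)]
  rw [h1]
  have h3 : (2:ℝ) * ((2:ℝ)^α)⁻¹ = ((2:ℝ)^(α-1))⁻¹ := by
    have : (2:ℝ)^α = 2^(α-1) * 2 := by
      rw [← Real.rpow_add_one (by norm_num : (2:ℝ) ≠ 0) (α-1)]
      ring_nf
    rw [this]
    have h4 : ((2:ℝ)^(α-1)) ≠ 0 := by positivity
    field_simp
  calc (2:ℝ)^n * (M * (T^α * (((2:ℝ)^α)⁻¹)^n))
      = (M * T^α) * ((2:ℝ) * ((2:ℝ)^α)⁻¹)^n := by rw [mul_pow]; ring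
    _ = (M * T^α) * (((2:ℝ)^(α-1))⁻¹)^n := by rw [h3]

lemma SLim_add (hT : 0 < T) (hM : 0 ≤ M) (hα : 1 < α)
    (hA0 : ∀ t : ℝ, 0 ≤ t → t ≤ T → A t t = 0)
    (hδ : ∀ s u t : ℝ, 0 ≤ s → s ≤ u → u ≤ t → t ≤ T →
      |A s t - A s u - A u t| ≤ M * (t-s)^α)
    {s u t : ℝ} (hs : 0 ≤ s) (hsu : s ≤ u) (hut : u ≤ t) (htT : t ≤ T) :
    SLim T A s u + SLim T A u t = SLim T A s t := by
  have h1 := SLim_tendsto hT hM hα hδ hs hsu (hut.trans htT)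
  have h2 := SLim_tendsto hT hM hα hδ (hs.trans hsu) hut htT
  have h3 := SLim_tendsto hT hM hα hδ hs (hsu.trans hut) htT
  have h4 : Tendsto (fun n => S T A n s u + S T A n u t - S T A n s t) atTop
      (𝓝 (SLim T A s u + SLim T A u t - SLim T A s t)) := (h1.add h2).sub h3
  have h5 : Tendsto (fun n => S T A n s u + S T A n u t - S T A n s t) atTop (𝓝 0) := by
    have hg : Tendsto (fun n : ℕ => (M * T^α) * (((2:ℝ)^(α-1))⁻¹)^n) atTop (𝓝 0) := by
      have := (tendsto_pow_atTop_nhds_zero_of_lt_one (by positivity : (0:ℝ) ≤ ((2:ℝ)^(α-1))⁻¹)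
        (r_lt_one hα)).const_mul (M * T^α)
      simpa using this
    apply squeeze_zero_norm (fun n => ?_) hg
    rw [Real.norm_eq_abs]
    refine (S_add_defect hT hM hα hA0 hδ hs hsu hut htT n).trans_eq ?_
    exact defect_geo hT hα n
  have := tendsto_nhds_unique h4 h5
  linarith

theorem sewing (hT : 0 < T) (hM : 0 ≤ M) (hα : 1 < α) (hα2 : α ≤ 2)
    (hA0 : ∀ t : ℝ, 0 ≤ t → t ≤ T → A t t = 0)
    (hδ : ∀ s u t : ℝ, 0 ≤ s → s ≤ u → u ≤ t → t ≤ T →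
      |A s t - A s u - A u t| ≤ M * (t-s)^α) :
    ∃ c : ℝ, 0 < c ∧ ∃ 𝒜 : ℝ → ℝ, 𝒜 0 = 0 ∧ ∀ s t : ℝ, 0 ≤ s → s ≤ t → t ≤ T →
      |𝒜 t - 𝒜 s - A s t| ≤ c * M * (t-s)^α := by
  have hr0 : (0:ℝ) ≤ ((2:ℝ)^(α-1))⁻¹ := by positivity
  have hr1 := r_lt_one hα
  refine ⟨1 + 2 * (1 - ((2:ℝ)^(α-1))⁻¹)⁻¹, ?_, fun t => SLim T A 0 t, ?_, ?_⟩
  · have : (0:ℝ) < 1 - ((2:ℝ)^(α-1))⁻¹ := by linarith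
    positivity
  · exact SLim_diag hA0 le_rfl hT.le
  · intro s t hs hst htT
    have hadd := SLim_add hT hM hα hA0 hδ le_rfl hs hst htT
    have hkey : SLim T A 0 t - SLim T A 0 s = SLim T A s t := by linarith
    rw [hkey]
    have htendsto : Tendsto (fun n => |S T A n s t - A s t|) atTop
        (𝓝 |SLim T A s t - A s t|) :=
      ((SLim_tendsto hT hM hα hδ hs hst htT).sub tendsto_const_nhds).abs
    exact le_of_tendsto htendsto (Eventually.of_forall fun n =>
      S_sub_A_bound hT hM hα hα2 hA0 hδ hs hst htT n)


end main
end NYSewing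

/-- Nonlinear Young germs admit sewings: if the two-parameter family `F_{s,t} : ℝ^d → ℝ`
is additive in time, uniformly bounded by `C (t−s)^{γ₀}` and Lipschitz in space with
constant `C (t−s)^{γ₁}`, and `X : [0,T] → ℝ^d` is `ρ`-Hölder with constant `R` where
`ρ + γ₁ > 1`, then the germ `A_{s,t} = F_{s,t}(X(s))` satisfies `|A_{s,t}| ≤ C (t−s)^{γ₀}`
and `|(δA)_{s,u,t}| ≤ C R (t−s)^{ρ+γ₁}`, and there are `c > 0` (depending only on
`ρ + γ₁`) and `𝒜 : [0,T] → ℝ` with `𝒜(0) = 0` and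
`|𝒜(t) − 𝒜(s) − F_{s,t}(X(s))| ≤ c C R (t−s)^{ρ+γ₁}` for `0 ≤ s ≤ t ≤ T`. -/
theorem nonlinear_young_germ_sewing
    (T : ℝ) (hT : 0 < T) (d : ℕ) (hd : 1 ≤ d) (C γ₀ γ₁ R ρ : ℝ)
    (hC : 0 ≤ C) (hγ₀ : 0 < γ₀) (hγ₀1 : γ₀ ≤ 1) (hγ₁ : 0 < γ₁) (hγ₁1 : γ₁ ≤ 1)
    (hR : 0 ≤ R) (hρ : 0 < ρ) (hρ1 : ρ ≤ 1) (hργ₁ : 1 < ρ + γ₁)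
    (F : ℝ → ℝ → EuclideanSpace ℝ (Fin d) → ℝ)
    (hadd : ∀ s u t : ℝ, 0 ≤ s → s ≤ u → u ≤ t → t ≤ T →
      ∀ x, F s u x + F u t x = F s t x)
    (hbd : ∀ s t : ℝ, 0 ≤ s → s ≤ t → t ≤ T → ∀ x, |F s t x| ≤ C * (t - s) ^ γ₀)
    (hlip : ∀ s t : ℝ, 0 ≤ s → s ≤ t → t ≤ T →
      ∀ x y, |F s t x - F s t y| ≤ C * (t - s) ^ γ₁ * ‖x - y‖)
    (X : ℝ → EuclideanSpace ℝ (Fin d))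
    (hX : ∀ u v : ℝ, u ∈ Set.Icc (0 : ℝ) T → v ∈ Set.Icc (0 : ℝ) T →
      ‖X u - X v‖ ≤ R * |u - v| ^ ρ) :
    (∀ s t : ℝ, 0 ≤ s → s ≤ t → t ≤ T → |F s t (X s)| ≤ C * (t - s) ^ γ₀) ∧
    (∀ s u t : ℝ, 0 ≤ s → s ≤ u → u ≤ t → t ≤ T →
      |F s t (X s) - F s u (X s) - F u t (X u)| ≤ C * R * (t - s) ^ (ρ + γ₁)) ∧
    ∃ c : ℝ, 0 < c ∧ ∃ 𝒜 : ℝ → ℝ, 𝒜 0 = 0 ∧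
      ∀ s t : ℝ, 0 ≤ s → s ≤ t → t ≤ T →
        |𝒜 t - 𝒜 s - F s t (X s)| ≤ c * C * R * (t - s) ^ (ρ + γ₁) := by
  set A : ℝ → ℝ → ℝ := fun s t => F s t (X s) with hA
  have hA0 : ∀ t : ℝ, 0 ≤ t → t ≤ T → A t t = 0 := by
    intro t ht htT
    have := hadd t t t ht le_rfl le_rfl htT (X t)
    simp only [hA]
    linarith
  have hδ : ∀ s u t : ℝ, 0 ≤ s → s ≤ u → u ≤ t → t ≤ T →
      |A s t - A s u - A u t| ≤ (C * R) * (t-s)^(ρ + γ₁) := by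
    intro s u t hs hsu hut htT
    have hFadd := hadd s u t hs hsu hut htT (X s)
    have hrw : A s t - A s u - A u t = F u t (X s) - F u t (X u) := by
      simp only [hA]
      linarith
    rw [hrw]
    have h1 := hlip u t (hs.trans hsu) hut htT (X s) (X u)
    have h2 := hX s u ⟨hs, (hsu.trans hut).trans htT⟩ ⟨hs.trans hsu, hut.trans htT⟩
    have h3 : |s - u| = u - s := by
      rw [abs_sub_comm, abs_of_nonneg (by linarith)]
    rw [h3] at h2
    have hnorm0 : (0:ℝ) ≤ ‖X s - X u‖ := norm_nonneg _
    have hClip0 : (0:ℝ) ≤ C * (t - u) ^ γ₁ :=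
      mul_nonneg hC (Real.rpow_nonneg (by linarith) _)
    have h4 : |F u t (X s) - F u t (X u)| ≤ C * (t - u) ^ γ₁ * (R * (u - s) ^ ρ) :=
      h1.trans (mul_le_mul_of_nonneg_left h2 hClip0)
    refine h4.trans ?_
    have h5 : (t - u) ^ γ₁ ≤ (t - s) ^ γ₁ :=
      Real.rpow_le_rpow (by linarith) (by linarith) hγ₁.le
    have h6 : (u - s) ^ ρ ≤ (t - s) ^ ρ :=
      Real.rpow_le_rpow (by linarith) (by linarith) hρ.le
    have h7 : (t-s)^(ρ + γ₁) = (t-s)^ρ * (t-s)^γ₁ :=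
      Real.rpow_add' (by linarith) (by positivity)
    calc C * (t - u) ^ γ₁ * (R * (u - s) ^ ρ)
        ≤ C * (t - s) ^ γ₁ * (R * (t - s) ^ ρ) := by
          have hx1 : (0:ℝ) ≤ (u-s)^ρ := Real.rpow_nonneg (by linarith) _
          have hx2 : (0:ℝ) ≤ (t-s)^γ₁ := Real.rpow_nonneg (by linarith) _
          exact mul_le_mul (mul_le_mul_of_nonneg_left h5 hC)
            (mul_le_mul_of_nonneg_left h6 hR)
            (mul_nonneg hR hx1) (mul_nonneg hC hx2)
      _ = (C * R) * ((t-s)^ρ * (t-s)^γ₁) := by ring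
      _ = (C * R) * (t-s)^(ρ + γ₁) := by rw [← h7]
  refine ⟨fun s t hs hst htT => hbd s t hs hst htT (X s), hδ, ?_⟩
  obtain ⟨c, hc, 𝒜, h𝒜0, h𝒜⟩ := NYSewing.sewing hT (mul_nonneg hC hR) hργ₁ (by linarith) hA0 hδ
  exact ⟨c, hc, 𝒜, h𝒜0, fun s t hs hst htT => by
    have := h𝒜 s t hs hst htT
    calc |𝒜 t - 𝒜 s - F s t (X s)| ≤ c * (C * R) * (t-s)^(ρ+γ₁) := this
      _ = c * C * R * (t-s)^(ρ+γ₁) := by ring⟩
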